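/- Let U ⊂ ℝ^N be a Lebesgue-measurable set of finite measure |U|, let u : U → ℝ be measurable, and let σ, r, Λ, S be positive real numbers with σ < r, (∫_U |u(x)|^r dx)^{1/r} ≤ S·Λ, and ∫_U |u(x)|^σ dx < ∞. Then ∫_U |u(x)|^σ · log|u(x)| dx ≤ ( |U|/(σ·e) + S^r/(e·(r−σ)) ) · Λ^σ + (log Λ)·∫_U |u(x)|^σ dx, where the integrand |u|^σ log|u| is interpreted as 0 at points where u(x) = 0 and e = exp(1). -/

import Mathlib

open MeasureTheory

lemma log_le_div_exp' {s : ℝ} (hs : 0 < s) : Real.log s ≤ s / Real.exp 1 := by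
  have h := Real.log_le_sub_one_of_pos (div_pos hs (Real.exp_pos 1))
  rw [Real.log_div hs.ne' (Real.exp_ne_zero 1), Real.log_exp] at h
  linarith

lemma aux1 {σ r t : ℝ} (hσr : σ < r) (ht : 0 < t) :
    t ^ σ * Real.log t ≤ t ^ r / (Real.exp 1 * (r - σ)) := by
  have hrs : 0 < r - σ := by linarith
  have h := log_le_div_exp' (Real.rpow_pos_of_pos ht (r - σ))
  rw [Real.log_rpow ht] at h
  have key := mul_le_mul_of_nonneg_left h (Real.rpow_nonneg ht.le σ)
  have hmul : t ^ σ * t ^ (r - σ) = t ^ r := by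
    rw [← Real.rpow_add ht]; ring_nf
  have he : 0 < Real.exp 1 := Real.exp_pos 1
  have key2 : Real.exp 1 * (t ^ σ * ((r - σ) * Real.log t)) ≤ t ^ r :=
    calc Real.exp 1 * (t ^ σ * ((r - σ) * Real.log t))
        ≤ Real.exp 1 * (t ^ σ * (t ^ (r - σ) / Real.exp 1)) :=
          mul_le_mul_of_nonneg_left key he.le
      _ = t ^ σ * t ^ (r - σ) := by field_simp
      _ = t ^ r := hmul
  rw [le_div_iff₀ (by positivity)]
  nlinarith [key2]

lemma aux2 {σ t : ℝ} (hσ : 0 < σ) (ht : 0 < t) (ht1 : t ≤ 1) :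
    t ^ σ * |Real.log t| ≤ 1 / (σ * Real.exp 1) := by
  have hlt : Real.log t ≤ 0 := Real.log_nonpos ht.le ht1
  rw [abs_of_nonpos hlt]
  have h := log_le_div_exp' (Real.rpow_pos_of_pos ht (-σ))
  rw [Real.log_rpow ht] at h
  have key := mul_le_mul_of_nonneg_left h (Real.rpow_nonneg ht.le σ)
  have hmul : t ^ σ * t ^ (-σ) = 1 := by
    rw [← Real.rpow_add ht]; norm_num
  have he : 0 < Real.exp 1 := Real.exp_pos 1
  have key2 : Real.exp 1 * (t ^ σ * (-σ * Real.log t)) ≤ 1 :=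
    calc Real.exp 1 * (t ^ σ * (-σ * Real.log t))
        ≤ Real.exp 1 * (t ^ σ * (t ^ (-σ) / Real.exp 1)) :=
          mul_le_mul_of_nonneg_left key he.le
      _ = t ^ σ * t ^ (-σ) := by field_simp
      _ = 1 := hmul
  rw [le_div_iff₀ (by positivity)]
  nlinarith [key2]

theorem log_weighted_norm_estimate' (N : ℕ) (U : Set (Fin N → ℝ))
    (hU : MeasurableSet U) (hUfin : volume U < ⊤)
    (u : (Fin N → ℝ) → ℝ) (hu : Measurable u)
    (σ r Λ S : ℝ) (hσ : 0 < σ) (hσr : σ < r) (hΛ : 0 < Λ) (hS : 0 < S)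
    (hur : IntegrableOn (fun x => |u x| ^ r) U)
    (hnorm : (∫ x in U, |u x| ^ r) ^ (1 / r) ≤ S * Λ)
    (huσ : IntegrableOn (fun x => |u x| ^ σ) U) :
    (∫ x in U, |u x| ^ σ * Real.log |u x|) ≤
      ((volume U).toReal / (σ * Real.exp 1) + S ^ r / (Real.exp 1 * (r - σ))) * Λ ^ σ +
        Real.log Λ * ∫ x in U, |u x| ^ σ := by
  have he : 0 < Real.exp 1 := Real.exp_pos 1
  have hrs : 0 < r - σ := by linarith
  have hr0 : 0 < r := hσ.trans hσr
  set c1 : ℝ := Λ ^ (σ - r) / (Real.exp 1 * (r - σ)) with hc1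
  have hc1pos : 0 < c1 := by positivity
  -- pointwise upper bound
  have hpt : ∀ x, |u x| ^ σ * Real.log |u x| ≤
      c1 * |u x| ^ r + Real.log Λ * |u x| ^ σ := by
    intro x
    rcases eq_or_lt_of_le (abs_nonneg (u x)) with h0 | ht
    · rw [← h0, Real.zero_rpow hσ.ne', Real.zero_rpow hr0.ne']
      simp
    · set t := |u x|
      have h1 := aux1 hσr (div_pos ht hΛ)
      rw [Real.div_rpow ht.le hΛ.le, Real.div_rpow ht.le hΛ.le,
        Real.log_div ht.ne' hΛ.ne'] at h1
      have hΛσ : (0:ℝ) < Λ ^ σ := Real.rpow_pos_of_pos hΛ σ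
      have hΛr : (0:ℝ) < Λ ^ r := Real.rpow_pos_of_pos hΛ r
      have hsub : Λ ^ (σ - r) = Λ ^ σ / Λ ^ r := Real.rpow_sub hΛ σ r
      have h2 := mul_le_mul_of_nonneg_left h1 hΛσ.le
      rw [hc1, hsub]
      have htσ : (0:ℝ) ≤ t ^ σ := Real.rpow_nonneg ht.le σ
      have hA : Λ ^ σ * (t ^ σ / Λ ^ σ * (Real.log t - Real.log Λ)) =
          t ^ σ * (Real.log t - Real.log Λ) := by field_simp
      have hB : Λ ^ σ * (t ^ r / Λ ^ r / (Real.exp 1 * (r - σ))) =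
          Λ ^ σ / Λ ^ r / (Real.exp 1 * (r - σ)) * t ^ r := by ring
      rw [hA, hB] at h2
      nlinarith [h2]
  -- integrability of LHS
  have hmeas : Measurable fun x => |u x| ^ σ * Real.log |u x| :=
    (((Real.continuous_rpow_const hσ.le).measurable.comp hu.abs).mul (Real.measurable_log.comp hu.abs))
  have hgint : IntegrableOn
      (fun x => 1 / (σ * Real.exp 1) + |u x| ^ r / (Real.exp 1 * (r - σ))) U := by
    exact (integrableOn_const hUfin.ne).add (hur.div_const _)
  have hf : IntegrableOn (fun x => |u x| ^ σ * Real.log |u x|) U := by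
    refine Integrable.mono hgint (hmeas.aestronglyMeasurable) (ae_of_all _ fun x => ?_)
    have hgpos : 0 ≤ 1 / (σ * Real.exp 1) + |u x| ^ r / (Real.exp 1 * (r - σ)) := by
      positivity
    rw [Real.norm_eq_abs, Real.norm_eq_abs, abs_of_nonneg hgpos, abs_mul,
      abs_of_nonneg (Real.rpow_nonneg (abs_nonneg _) σ)]
    rcases eq_or_lt_of_le (abs_nonneg (u x)) with h0 | ht
    · rw [← h0, Real.zero_rpow hσ.ne', Real.zero_rpow hr0.ne']
      simp
      positivity
    · rcases le_or_gt (|u x|) 1 with h1 | h1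
      · have := aux2 hσ ht h1
        have : |u x| ^ σ * |Real.log (|u x|)| ≤ 1 / (σ * Real.exp 1) := this
        have hnn : (0:ℝ) ≤ |u x| ^ r / (Real.exp 1 * (r - σ)) := by positivity
        linarith
      · have hlog : 0 ≤ Real.log (|u x|) := Real.log_nonneg h1.le
        rw [abs_of_nonneg hlog]
        have := aux1 hσr ht
        have hnn : (0:ℝ) ≤ 1 / (σ * Real.exp 1) := by positivity
        linarith
  -- integrable RHS
  have hh : IntegrableOn (fun x => c1 * |u x| ^ r + Real.log Λ * |u x| ^ σ) U :=
    (hur.const_mul c1).add (huσ.const_mul (Real.log Λ))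
  have hint : (∫ x in U, |u x| ^ σ * Real.log |u x|) ≤
      ∫ x in U, (c1 * |u x| ^ r + Real.log Λ * |u x| ^ σ) :=
    setIntegral_mono hf hh hpt
  rw [integral_add (hur.const_mul c1) (huσ.const_mul (Real.log Λ)),
    integral_const_mul, integral_const_mul] at hint
  -- bound ∫ |u|^r
  have hA0 : (0:ℝ) ≤ ∫ x in U, |u x| ^ r :=
    integral_nonneg fun x => Real.rpow_nonneg (abs_nonneg _) r
  have hAr : (∫ x in U, |u x| ^ r) ≤ (S * Λ) ^ r := by
    have h2 : ((∫ x in U, |u x| ^ r) ^ (1 / r)) ^ r ≤ (S * Λ) ^ r :=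
      Real.rpow_le_rpow (Real.rpow_nonneg hA0 _) hnorm hr0.le
    rwa [one_div, Real.rpow_inv_rpow hA0 hr0.ne'] at h2
  have hSL : c1 * (S * Λ) ^ r = S ^ r / (Real.exp 1 * (r - σ)) * Λ ^ σ := by
    rw [hc1, Real.mul_rpow hS.le hΛ.le, Real.rpow_sub hΛ]
    have hΛr : (0:ℝ) < Λ ^ r := Real.rpow_pos_of_pos hΛ r
    field_simp
  have hmeasU : (0:ℝ) ≤ (volume U).toReal / (σ * Real.exp 1) * Λ ^ σ := by positivity
  have hΛσ : (0:ℝ) < Λ ^ σ := Real.rpow_pos_of_pos hΛ σ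
  nlinarith [mul_le_mul_of_nonneg_left hAr hc1pos.le]
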